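/- In the graph G' constructed from G as above (k copies of each vertex, with classes 1,...,k−1 connected by the edge pattern of G and class k matched to the copies of each vertex), there exists a maximum independent set I' such that for every vertex v of G, either all copies (v,i) with i ≠ k belong to I', or (v,k) belongs to I'. -/

import Mathlib

open Finset

/-- The maximum size of an independent set of `G`. -/
noncomputable def indepNum {V : Type*} [Fintype V] (G : SimpleGraph V) : ℕ :=
  sSup {n | ∃ s : Finset V, (∀ u ∈ s, ∀ w ∈ s, ¬ G.Adj u w) ∧ s.card = n}

/-- The `k`-layered graph `G'` built from `G`: vertices are `V × Fin k`; each class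
`V × {i}` is independent; for `i ≠ j` both different from the last class, `(u,i)` is
adjacent to `(v,j)` iff `u ~ v` in `G`; the last class is joined to each other class by
a perfect matching on the copies of each vertex. -/
def layered {V : Type*} (G : SimpleGraph V) (k : ℕ) : SimpleGraph (V × Fin k) where
  Adj a b := a.2 ≠ b.2 ∧
    ((a.2.val < k - 1 ∧ b.2.val < k - 1 ∧ G.Adj a.1 b.1) ∨
     ((a.2.val = k - 1 ∨ b.2.val = k - 1) ∧ a.1 = b.1))
  symm := by
    constructor
    rintro ⟨u, i⟩ ⟨v, j⟩ ⟨hne, h⟩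
    refine ⟨hne.symm, ?_⟩
    rcases h with ⟨hi, hj, hadj⟩ | ⟨hij, huv⟩
    · exact Or.inl ⟨hj, hi, hadj.symm⟩
    · exact Or.inr ⟨hij.symm, huv.symm⟩
  loopless := by constructor; rintro ⟨u, i⟩ ⟨h, _⟩; exact h rfl

lemma indep_bddAbove {V : Type*} [Fintype V] (G : SimpleGraph V) :
    BddAbove {n | ∃ s : Finset V, (∀ u ∈ s, ∀ w ∈ s, ¬ G.Adj u w) ∧ s.card = n} := by
  refine ⟨Fintype.card V, ?_⟩
  rintro n ⟨s, -, rfl⟩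
  exact (s.card_le_univ).trans_eq Finset.card_univ

lemma indep_set_nonempty {V : Type*} [Fintype V] (G : SimpleGraph V) :
    {n | ∃ s : Finset V, (∀ u ∈ s, ∀ w ∈ s, ¬ G.Adj u w) ∧ s.card = n}.Nonempty :=
  ⟨0, ∅, by simp, by simp⟩

lemma card_le_indepNum {V : Type*} [Fintype V] (G : SimpleGraph V) (s : Finset V)
    (h : ∀ u ∈ s, ∀ w ∈ s, ¬ G.Adj u w) : s.card ≤ indepNum G :=
  le_csSup (indep_bddAbove G) ⟨s, h, rfl⟩

lemma exists_max_indep {V : Type*} [Fintype V] (G : SimpleGraph V) :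
    ∃ s : Finset V, (∀ u ∈ s, ∀ w ∈ s, ¬ G.Adj u w) ∧ s.card = indepNum G :=
  Nat.sSup_mem (indep_set_nonempty G) (indep_bddAbove G)

/-- In the `k`-layered graph `G'` (`k > 2`) there is a maximum independent set `I'`
such that for every vertex `v` of `G`, either all copies `(v,i)` with `i` not in the
last class belong to `I'`, or the last-class copy of `v` belongs to `I'`. -/
theorem layered_exists_structured_MIS {V : Type*} [Fintype V] [DecidableEq V]
    (G : SimpleGraph V) (k : ℕ) (hk : 2 < k) :
    ∃ I' : Finset (V × Fin k),
      (∀ a ∈ I', ∀ b ∈ I', ¬ (layered G k).Adj a b) ∧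
      I'.card = indepNum (layered G k) ∧
      ∀ v : V, (∀ i : Fin k, i.val ≠ k - 1 → (v, i) ∈ I') ∨
        (v, (⟨k - 1, by omega⟩ : Fin k)) ∈ I' := by
  classical
  obtain ⟨S, hSind, hScard⟩ := exists_max_indep G
  set α := indepNum G with hα
  set n := Fintype.card V with hn
  have hα_le_n : α ≤ n := by
    rw [← hScard]; exact (S.card_le_univ).trans_eq Finset.card_univ
  set last : Fin k := ⟨k - 1, by omega⟩ with hlast
  have hlastval : last.val = k - 1 := rfl
  set A : Finset (Fin k) := Finset.univ \ {last} with hA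
  have hAcard : A.card = k - 1 := by
    rw [hA, card_sdiff_of_subset (by simp), card_univ, Fintype.card_fin, card_singleton]
  set I : Finset (V × Fin k) := S ×ˢ A ∪ (Finset.univ \ S) ×ˢ {last} with hI
  have hmem : ∀ a : V × Fin k,
      a ∈ I ↔ (a.1 ∈ S ∧ a.2 ≠ last) ∨ (a.1 ∉ S ∧ a.2 = last) := by
    intro a
    rw [hI, Finset.mem_union, Finset.mem_product, Finset.mem_product, hA,
      Finset.mem_sdiff, Finset.mem_sdiff, Finset.mem_singleton]
    simp only [Finset.mem_univ, true_and]
  -- aux : i ≠ last ↔ i.val ≠ k-1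
  have hnelast : ∀ i : Fin k, i ≠ last ↔ i.val ≠ k - 1 := by
    intro i; constructor
    · intro h hval; exact h (Fin.ext hval)
    · intro h heq; exact h (by rw [heq])
  have hltlast : ∀ i : Fin k, i ≠ last → i.val < k - 1 := by
    intro i h
    have := i.isLt
    have := (hnelast i).mp h
    omega
  -- independence of I
  have hIind : ∀ a ∈ I, ∀ b ∈ I, ¬ (layered G k).Adj a b := by
    intro a ha b hb
    rintro ⟨hne, hadj⟩
    rw [hmem] at ha hb
    rcases hadj with ⟨hi, hj, hG⟩ | ⟨hor, huv⟩
    · have hu : a.1 ∈ S := by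
        rcases ha with ⟨h, _⟩ | ⟨_, h⟩
        · exact h
        · exfalso
          have h2 : (a.2 : ℕ) = k - 1 := by rw [h]
          omega
      have hv : b.1 ∈ S := by
        rcases hb with ⟨h, _⟩ | ⟨_, h⟩
        · exact h
        · exfalso
          have h2 : (b.2 : ℕ) = k - 1 := by rw [h]
          omega
      exact hSind _ hu _ hv hG
    · rw [← huv] at hb
      by_cases hu : a.1 ∈ S
      · have hi' : a.2 ≠ last := by
          rcases ha with ⟨_, h⟩ | ⟨h, _⟩
          · exact h
          · exact absurd hu h
        have hj' : b.2 ≠ last := by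
          rcases hb with ⟨_, h⟩ | ⟨h, _⟩
          · exact h
          · exact absurd hu h
        rcases hor with h | h
        · exact (hnelast a.2).mp hi' h
        · exact (hnelast b.2).mp hj' h
      · have hi' : a.2 = last := by
          rcases ha with ⟨h, _⟩ | ⟨_, h⟩
          · exact absurd h hu
          · exact h
        have hj' : b.2 = last := by
          rcases hb with ⟨h, _⟩ | ⟨_, h⟩
          · exact absurd h hu
          · exact h
        exact hne (hi'.trans hj'.symm)
  -- cardinality of I
  have hIcard : I.card = n + α * (k - 2) := by
    have hdisj : Disjoint (S ×ˢ A) ((Finset.univ \ S) ×ˢ {last}) := by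
      rw [Finset.disjoint_left]
      rintro ⟨u, i⟩ ha hb
      rw [Finset.mem_product] at ha hb
      exact (Finset.mem_sdiff.mp hb.1).2 ha.1
    rw [hI, Finset.card_union_of_disjoint hdisj, Finset.card_product,
      Finset.card_product, hAcard, Finset.card_singleton,
      Finset.card_sdiff_of_subset (Finset.subset_univ S), Finset.card_univ, hScard]
    have h1 : α * (k - 1) = α * (k - 2) + α := by
      rw [← Nat.mul_succ]; congr 1; omega
    omega
  -- upper bound for any independent set
  have key : ∀ J : Finset (V × Fin k), (∀ a ∈ J, ∀ b ∈ J, ¬ (layered G k).Adj a b) →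
      J.card ≤ n + α * (k - 2) := by
    intro J hJ
    have hfib : J.card = ∑ v : V, (J.filter (fun a => a.1 = v)).card :=
      Finset.card_eq_sum_card_fiberwise (fun a _ => Finset.mem_univ a.1)
    set T : Finset V :=
      Finset.univ.filter (fun v : V => 2 ≤ (J.filter (fun a => a.1 = v)).card) with hT
    have hTmem : ∀ v : V, v ∈ T ↔ 2 ≤ (J.filter (fun a => a.1 = v)).card := by
      intro v; simp [hT]
    -- for v ∈ T, the last copy is not in J
    have hnotlast : ∀ v ∈ T, (v, last) ∉ J := by
      intro v hv hmem'
      have h2 : 1 < (J.filter (fun a => a.1 = v)).card := (hTmem v).mp hv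
      obtain ⟨c, hc, hcne⟩ := Finset.exists_mem_ne h2 (v, last)
      rw [Finset.mem_filter] at hc
      have hc2 : c.2 ≠ last := by
        intro h
        exact hcne (Prod.ext hc.2 h)
      refine hJ (v, last) hmem' c hc.1 ?_
      exact ⟨fun h => hc2 h.symm, Or.inr ⟨Or.inl hlastval, hc.2.symm⟩⟩
    -- pointwise bound
    have hbound : ∀ v : V,
        (J.filter (fun a => a.1 = v)).card ≤ if v ∈ T then k - 1 else 1 := by
      intro v
      by_cases hv : v ∈ T
      · rw [if_pos hv]
        have hsub : J.filter (fun a => a.1 = v) ⊆ {v} ×ˢ A := by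
          rintro ⟨u, i⟩ hm
          rw [Finset.mem_filter] at hm
          simp only at hm
          rw [Finset.mem_product]
          refine ⟨by simp [hm.2], ?_⟩
          rw [hA, Finset.mem_sdiff]
          refine ⟨Finset.mem_univ _, ?_⟩
          rw [Finset.mem_singleton]
          intro h
          exact hnotlast v hv (by rw [← hm.2, ← h]; exact hm.1)
        calc (J.filter (fun a => a.1 = v)).card ≤ ({v} ×ˢ A).card :=
              Finset.card_le_card hsub
          _ = k - 1 := by rw [Finset.card_product, Finset.card_singleton, hAcard, one_mul]
      · rw [if_neg hv]
        have := (hTmem v).not.mp hv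
        omega
    -- T is independent in G
    have hTind : ∀ u ∈ T, ∀ v ∈ T, ¬ G.Adj u v := by
      intro u hu v hv hG
      have h2 : 1 < (J.filter (fun a => a.1 = u)).card := (hTmem u).mp hu
      obtain ⟨a, haf, b, hbf, hab⟩ := Finset.one_lt_card.mp h2
      rw [Finset.mem_filter] at haf hbf
      have hab2 : a.2 ≠ b.2 := by
        intro h; exact hab (Prod.ext (haf.2.trans hbf.2.symm) h)
      have h1 : 0 < (J.filter (fun a => a.1 = v)).card := by
        have := (hTmem v).mp hv; omega
      obtain ⟨c, hcf⟩ := Finset.card_pos.mp h1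
      rw [Finset.mem_filter] at hcf
      -- all copies avoid last
      have halast : ∀ x : V × Fin k, x ∈ J → x.1 = u → x.2 ≠ last := by
        intro x hx hx1 h
        exact hnotlast u hu (by rw [← hx1, ← h]; exact hx)
      have hclast : c.2 ≠ last := by
        intro h
        exact hnotlast v hv (by rw [← hcf.2, ← h]; exact hcf.1)
      have hcval : c.2.val < k - 1 := hltlast _ hclast
      have haval : a.2.val < k - 1 := hltlast _ (halast a haf.1 haf.2)
      have hbval : b.2.val < k - 1 := hltlast _ (halast b hbf.1 hbf.2)
      by_cases hac : a.2 = c.2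
      · have hbc : b.2 ≠ c.2 := by rw [← hac]; exact fun h => hab2 h.symm
        refine hJ b hbf.1 c hcf.1 ⟨hbc, Or.inl ⟨hbval, hcval, ?_⟩⟩
        rw [hbf.2, hcf.2]; exact hG
      · refine hJ a haf.1 c hcf.1 ⟨hac, Or.inl ⟨haval, hcval, ?_⟩⟩
        rw [haf.2, hcf.2]; exact hG
    have hTcard : T.card ≤ α := card_le_indepNum G T hTind
    have hsum : ∑ v : V, (if v ∈ T then k - 1 else 1) =
        T.card * (k - 1) + (n - T.card) := by
      rw [Finset.sum_ite, Finset.sum_const, Finset.sum_const, smul_eq_mul,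
        smul_eq_mul, mul_one]
      have h1 : Finset.univ.filter (fun v => v ∈ T) = T := by
        ext v; simp
      have h2 := Finset.card_filter_add_card_filter_not
        (s := (Finset.univ : Finset V)) (p := fun v => v ∈ T)
      rw [h1] at h2 ⊢
      have : (Finset.univ : Finset V).card = n := Finset.card_univ
      omega
    have hfinal : T.card * (k - 1) + (n - T.card) ≤ n + α * (k - 2) := by
      have h1 : T.card * (k - 1) = T.card * (k - 2) + T.card := by
        rw [← Nat.mul_succ]; congr 1; omega
      have h2 : T.card * (k - 2) ≤ α * (k - 2) :=
        Nat.mul_le_mul_right _ hTcard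
      have h3 : T.card ≤ n := hTcard.trans hα_le_n
      omega
    calc J.card = ∑ v : V, (J.filter (fun a => a.1 = v)).card := hfib
      _ ≤ ∑ v : V, (if v ∈ T then k - 1 else 1) :=
          Finset.sum_le_sum (fun v _ => hbound v)
      _ = T.card * (k - 1) + (n - T.card) := hsum
      _ ≤ n + α * (k - 2) := hfinal
  -- I is maximum
  have hle : I.card ≤ indepNum (layered G k) :=
    card_le_indepNum (layered G k) I hIind
  have hge : indepNum (layered G k) ≤ I.card := by
    refine csSup_le (indep_set_nonempty (layered G k)) ?_
    rintro m ⟨J, hJ, rfl⟩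
    rw [hIcard]
    exact key J hJ
  refine ⟨I, hIind, le_antisymm hle hge, ?_⟩
  intro v
  by_cases hv : v ∈ S
  · left
    intro i hi
    rw [hmem]
    exact Or.inl ⟨hv, (hnelast i).mpr hi⟩
  · right
    rw [hmem]
    exact Or.inr ⟨hv, rfl⟩
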